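/- For f(z) = c·e^{πz} + (1/c)·e^{-π·conj(z)} with c > 0, writing h(z) = c·e^{πz}, g(z) = (1/c)·e^{-πz}, and σ(z) = log(|h'(z)| + |g'(z)|), the Schwarzian derivative of the harmonic mapping satisfies Sf(z) = -π²/2 + 4π⁴·e^{-2σ(z)} for all z = x + iy, where e^{σ(z)} = π(c·e^{πx} + (1/c)e^{-πx}). -/

import Mathlib

/-- The classical (complex) Schwarzian derivative. -/
noncomputable def schwarzian (f : ℂ → ℂ) (z : ℂ) : ℂ :=
  deriv (fun w => deriv (deriv f) w / deriv f w) z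
    - (1/2) * (deriv (deriv f) z / deriv f z)^2

lemma deriv_aexp (a b : ℂ) :
    deriv (fun w => a * Complex.exp (b * w)) = fun z => a * b * Complex.exp (b * z) := by
  funext z
  have h : HasDerivAt (fun w => a * Complex.exp (b * w)) (a * b * Complex.exp (b * z)) z := by
    have := ((Complex.hasDerivAt_exp (b * z)).comp z
      ((hasDerivAt_id z).const_mul b)).const_mul a
    simpa [mul_comm, mul_assoc, mul_left_comm] using this
  exact h.deriv

lemma schwarzian_aexp (a b : ℂ) (ha : a ≠ 0) (hb : b ≠ 0) (z : ℂ) :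
    schwarzian (fun w => a * Complex.exp (b * w)) z = -b^2 / 2 := by
  unfold schwarzian
  rw [deriv_aexp, deriv_aexp]
  have h1 : (fun w => a * b * b * Complex.exp (b * w) / (a * b * Complex.exp (b * w)))
      = fun _ : ℂ => b := by
    funext w
    field_simp [Complex.exp_ne_zero]
  rw [h1]
  simp
  field_simp

/-- For the harmonic mapping `f(z) = c e^{πz} + (1/c) e^{-π z̄}`, with
`h(z) = c e^{πz}`, `q(z) = (i/c) e^{-πz}` and conformal factor
`e^{σ} = π(c e^{πx} + (1/c) e^{-πx})`, the harmonic Schwarzian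
`Sf = Sh + (2 q̄/(1+|q|²))(q'' - q'h''/h') - 4(q' q̄/(1+|q|²))²`
equals `-π²/2 + 4π⁴ e^{-2σ}`. -/
theorem harmonic_schwarzian_catenoid (c : ℝ) (hc : 0 < c) :
    ∀ z : ℂ,
      (schwarzian (fun w => (c:ℂ) * Complex.exp ((Real.pi : ℂ) * w)) z
        + (2 * (starRingEnd ℂ) ((Complex.I / c) * Complex.exp (-(Real.pi : ℂ) * z)) /
            (1 + ‖(Complex.I / c) * Complex.exp (-(Real.pi : ℂ) * z)‖^2)) *
          (deriv (deriv (fun w => (Complex.I / c) * Complex.exp (-(Real.pi : ℂ) * w))) z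
            - deriv (fun w => (Complex.I / c) * Complex.exp (-(Real.pi : ℂ) * w)) z *
              deriv (deriv (fun w => (c:ℂ) * Complex.exp ((Real.pi : ℂ) * w))) z /
              deriv (fun w => (c:ℂ) * Complex.exp ((Real.pi : ℂ) * w)) z)
        - 4 * (deriv (fun w => (Complex.I / c) * Complex.exp (-(Real.pi : ℂ) * w)) z *
              (starRingEnd ℂ) ((Complex.I / c) * Complex.exp (-(Real.pi : ℂ) * z)) /
            (1 + ‖(Complex.I / c) * Complex.exp (-(Real.pi : ℂ) * z)‖^2))^2)
      = ((-Real.pi^2 / 2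
          + 4 * Real.pi^4 *
            Real.exp (-2 * Real.log (Real.pi *
              (c * Real.exp (Real.pi * z.re) + (1/c) * Real.exp (-Real.pi * z.re)))) : ℝ)
          : ℂ) := by
  intro z
  have hπ : (0:ℝ) < Real.pi := Real.pi_pos
  have hπc : (Real.pi : ℂ) ≠ 0 := by exact_mod_cast hπ.ne'
  have hcc : (c : ℂ) ≠ 0 := by exact_mod_cast hc.ne'
  obtain ⟨s, hsdef⟩ : ∃ t : ℝ, (1/c) * Real.exp (-Real.pi * z.re) = t := ⟨_, rfl⟩
  have hs0 : 0 < s := by rw [← hsdef]; positivity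
  have hr : ‖(Complex.I / c) * Complex.exp (-(Real.pi:ℂ) * z)‖ = s := by
    rw [norm_mul, norm_div, Complex.norm_exp]
    have : (-(Real.pi:ℂ) * z).re = -Real.pi * z.re := by simp [Complex.mul_re]
    rw [this]
    simp only [Complex.norm_real, Real.norm_eq_abs, Complex.norm_I, abs_of_pos hc, ← hsdef]
  have hq : ((Complex.I / c) * Complex.exp (-(Real.pi:ℂ) * z)) *
      (starRingEnd ℂ) ((Complex.I / c) * Complex.exp (-(Real.pi:ℂ) * z)) = (s:ℂ)^2 := by
    rw [Complex.mul_conj, Complex.normSq_eq_norm_sq, hr]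
    push_cast
    ring
  rw [schwarzian_aexp _ _ hcc hπc, deriv_aexp, deriv_aexp, deriv_aexp, deriv_aexp, hr, hsdef]
  beta_reduce
  rw [show Complex.I / ↑c * -↑Real.pi * -↑Real.pi * Complex.exp (-↑Real.pi * z) -
      Complex.I / ↑c * -↑Real.pi * Complex.exp (-↑Real.pi * z) *
        (↑c * ↑Real.pi * ↑Real.pi * Complex.exp (↑Real.pi * z)) /
        (↑c * ↑Real.pi * Complex.exp (↑Real.pi * z))
    = 2 * (Real.pi:ℂ)^2 * (Complex.I / ↑c * Complex.exp (-↑Real.pi * z)) by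
      rw [mul_div_assoc]
      rw [show (↑c * ↑Real.pi * ↑Real.pi * Complex.exp (↑Real.pi * z)) /
          (↑c * ↑Real.pi * Complex.exp (↑Real.pi * z)) = (Real.pi:ℂ) by
        rw [div_eq_iff (mul_ne_zero (mul_ne_zero hcc hπc) (Complex.exp_ne_zero _))]
        ring]
      ring]
  have h1s : (0:ℝ) < 1 + s^2 := by positivity
  have h1sC : ((1:ℂ) + (s:ℂ)^2) ≠ 0 := by exact_mod_cast h1s.ne'
  have hinv : ((1:ℂ) + (s:ℂ)^2) * ((1:ℂ) + (s:ℂ)^2)⁻¹ = 1 := mul_inv_cancel₀ h1sC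
  have hT : (0:ℝ) < Real.pi * (c * Real.exp (Real.pi * z.re) + s) := by positivity
  have hlog : Real.exp (-2 * Real.log (Real.pi * (c * Real.exp (Real.pi * z.re) + s)))
      = ((Real.pi * (c * Real.exp (Real.pi * z.re) + s)) *
         (Real.pi * (c * Real.exp (Real.pi * z.re) + s)))⁻¹ := by
    rw [show (-2:ℝ) * Real.log (Real.pi * (c * Real.exp (Real.pi * z.re) + s)) =
        -(Real.log (Real.pi * (c * Real.exp (Real.pi * z.re) + s)) +
          Real.log (Real.pi * (c * Real.exp (Real.pi * z.re) + s))) by ring,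
      Real.exp_neg, Real.exp_add, Real.exp_log hT]
  have hAs : c * Real.exp (Real.pi * z.re) * s = 1 := by
    rw [← hsdef]
    calc c * Real.exp (Real.pi*z.re) * (1/c * Real.exp (-Real.pi*z.re))
        = (c * (1/c)) * (Real.exp (Real.pi*z.re) * Real.exp (-Real.pi*z.re)) := by ring
      _ = 1 := by rw [← Real.exp_add]; field_simp; simp
  trans ((-Real.pi^2/2 + 4*Real.pi^2*s^2/(1+s^2)/(1+s^2) : ℝ) : ℂ)
  · push_cast
    linear_combination (4*(Real.pi:ℂ)^2*((1:ℂ)+(s:ℂ)^2)⁻¹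
      - 4*(Real.pi:ℂ)^2*(((Complex.I / c) * Complex.exp (-(Real.pi:ℂ) * z)) *
          (starRingEnd ℂ) ((Complex.I / c) * Complex.exp (-(Real.pi:ℂ) * z)) + (s:ℂ)^2)
        * ((1:ℂ)+(s:ℂ)^2)⁻¹ * ((1:ℂ)+(s:ℂ)^2)⁻¹) * hq
      + (-(4*(Real.pi:ℂ)^2*((1:ℂ)+(s:ℂ)^2)⁻¹*(s:ℂ)^2)) * hinv
  · rw [hlog]
    norm_cast
    have hkey : Real.pi * (c * Real.exp (Real.pi*z.re) + s) = Real.pi * (1+s^2)/s := by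
      rw [eq_div_iff hs0.ne']
      linear_combination Real.pi * hAs
    rw [hkey]
    field_simp
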